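/- Every finite normal orthogroup satisfies the identity (xy)^ω = x^ω y^ω, where a^ω denotes the unique idempotent power of a. -/
import Mathlib


/-- `spow a n` is the power `a^(n+1)` in a semigroup. -/
def spow {S : Type*} [Semigroup S] (a : S) : ℕ → S
  | 0 => a
  | n + 1 => spow a n * a

section Aux

variable {S : Type*} [Semigroup S]

lemma spow_succ (a : S) (n : ℕ) : spow a (n + 1) = spow a n * a := rfl

lemma spow_mul_comm (a : S) (n : ℕ) : spow a n * a = a * spow a n := by
  induction n with
  | zero => rfl
  | succ n ih =>
    show spow a n * a * a = a * (spow a n * a)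
    rw [ih, mul_assoc, ih]

lemma spow_succ' (a : S) (n : ℕ) : spow a (n + 1) = a * spow a n := by
  rw [spow_succ, spow_mul_comm]

lemma spow_add (a : S) (m n : ℕ) : spow a (m + n + 1) = spow a m * spow a n := by
  induction n with
  | zero => rfl
  | succ n ih =>
    show spow a (m + n + 1) * a = spow a m * (spow a n * a)
    rw [ih, mul_assoc]

lemma spow_spow (a : S) (m k : ℕ) : spow (spow a m) k = spow a (m * k + m + k) := by
  induction k with
  | zero => simp [spow]
  | succ k ih =>
    have h : m * k + m + k + m + 1 = m * (k + 1) + m + (k + 1) := by ring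
    calc spow (spow a m) (k + 1) = spow (spow a m) k * spow a m := rfl
      _ = spow a (m * k + m + k) * spow a m := by rw [ih]
      _ = spow a (m * k + m + k + m + 1) := (spow_add a _ m).symm
      _ = spow a (m * (k + 1) + m + (k + 1)) := by rw [h]

lemma spow_idem (e : S) (he : e * e = e) (n : ℕ) : spow e n = e := by
  induction n with
  | zero => rfl
  | succ n ih =>
    show spow e n * e = e
    rw [ih, he]

lemma spow_shift (a b : S) (n : ℕ) : spow (a * b) n * a = a * spow (b * a) n := by
  induction n with
  | zero => exact mul_assoc a b a
  | succ n ih =>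
    calc spow (a * b) (n + 1) * a = spow (a * b) n * ((a * b) * a) := by
          rw [spow_succ, mul_assoc]
      _ = spow (a * b) n * (a * (b * a)) := by rw [mul_assoc]
      _ = (spow (a * b) n * a) * (b * a) := by rw [mul_assoc]
      _ = (a * spow (b * a) n) * (b * a) := by rw [ih]
      _ = a * (spow (b * a) n * (b * a)) := by rw [mul_assoc]
      _ = a * spow (b * a) (n + 1) := by rw [← spow_succ]

/-- In a semigroup with an idempotent-power operator, `ω (a*b) * a = a * ω (b*a)`. -/
lemma omega_shift (ω : S → S)
    (hpow : ∀ a : S, ∃ n : ℕ, ω a = spow a n)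
    (hidem : ∀ a : S, ω a * ω a = ω a)
    (a b : S) : ω (a * b) * a = a * ω (b * a) := by
  obtain ⟨m, hm⟩ := hpow (a * b)
  obtain ⟨k, hk⟩ := hpow (b * a)
  have h1 : ω (a * b) = spow (a * b) (m * k + m + k) := by
    rw [← spow_spow, ← hm, spow_idem _ (hidem (a * b))]
  have h2 : ω (b * a) = spow (b * a) (m * k + m + k) := by
    have hh : m * k + m + k = k * m + k + m := by ring
    rw [hh, ← spow_spow, ← hk, spow_idem _ (hidem (b * a))]
  rw [h1, h2, spow_shift]

/-- Existence of a group inverse relative to `ω`. -/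
lemma inv_exists (ω : S → S)
    (hpow : ∀ a : S, ∃ n : ℕ, ω a = spow a n)
    (hcr_left : ∀ a : S, ω a * a = a)
    (hcr_right : ∀ a : S, a * ω a = a)
    (a : S) : ∃ b : S, a * b = ω a ∧ b * a = ω a := by
  obtain ⟨n, hn⟩ := hpow a
  cases n with
  | zero =>
    refine ⟨ω a, ?_, ?_⟩
    · rw [hcr_right]; exact hn.symm
    · rw [hcr_left]; exact hn.symm
  | succ m =>
    refine ⟨spow a m, ?_, ?_⟩
    · rw [hn, spow_succ']
    · rw [hn, spow_succ]

/-- Stability-type lemma: if `u ≤ v` (idempotents) and `v = a * u * b`, then `u = v`. -/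
lemma stab (ω : S → S)
    (hpow : ∀ a : S, ∃ n : ℕ, ω a = spow a n)
    (hidem : ∀ a : S, ω a * ω a = ω a)
    (u v a b : S) (hu : u * u = u)
    (huv : u * v = u) (hvu : v * u = u)
    (hveq : v = a * u * b) : u = v := by
  have huvu : u * v * u = u := by rw [huv, hu]
  have base : v = (a * u) * v * (u * b) := by
    calc v = a * u * b := hveq
      _ = a * (u * v * u) * b := by rw [huvu]
      _ = (a * u) * v * (u * b) := by simp only [mul_assoc]
  have iter : ∀ k, v = spow (a * u) k * v * spow (u * b) k := by
    intro k
    induction k with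
    | zero => exact base
    | succ k ih =>
      calc v = spow (a * u) k * v * spow (u * b) k := ih
        _ = spow (a * u) k * ((a * u) * v * (u * b)) * spow (u * b) k := by rw [← base]
        _ = (spow (a * u) k * (a * u)) * v * ((u * b) * spow (u * b) k) := by
            simp only [mul_assoc]
        _ = spow (a * u) (k + 1) * v * spow (u * b) (k + 1) := by
            rw [spow_succ, spow_succ']
  obtain ⟨n, hn⟩ := hpow (u * b)
  have huQ : ∀ m, u * spow (u * b) m = spow (u * b) m := by
    intro m
    induction m with
    | zero =>
      show u * (u * b) = u * b
      rw [← mul_assoc, hu]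
    | succ m ih =>
      show u * (spow (u * b) m * (u * b)) = spow (u * b) m * (u * b)
      rw [← mul_assoc, ih]
  have hQQ : spow (u * b) n * spow (u * b) n = spow (u * b) n := by
    rw [← hn]; exact hidem _
  have hvQ : v * ω (u * b) = v := by
    rw [hn]
    calc v * spow (u * b) n
        = (spow (a * u) n * v * spow (u * b) n) * spow (u * b) n := by rw [← iter n]
      _ = spow (a * u) n * v * (spow (u * b) n * spow (u * b) n) := by
          simp only [mul_assoc]
      _ = spow (a * u) n * v * spow (u * b) n := by rw [hQQ]
      _ = v := (iter n).symm
  have huQω : u * ω (u * b) = ω (u * b) := by rw [hn]; exact huQ n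
  have hw : (v * u) * (v * u) = v * u := by
    calc (v * u) * (v * u) = v * (u * v) * u := by simp only [mul_assoc]
      _ = v * u * u := by rw [huv]
      _ = v * u := by rw [mul_assoc, hu]
  have h7 : v = (v * u) * ω (u * b) := by
    calc v = v * ω (u * b) := hvQ.symm
      _ = v * (u * ω (u * b)) := by rw [huQω]
      _ = (v * u) * ω (u * b) := by rw [← mul_assoc]
  have h8 : (v * u) * v = v := by
    calc (v * u) * v = (v * u) * ((v * u) * ω (u * b)) := by rw [← h7]
      _ = ((v * u) * (v * u)) * ω (u * b) := by rw [← mul_assoc]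
      _ = (v * u) * ω (u * b) := by rw [hw]
      _ = v := h7.symm
  have h9 : (v * u) * v = v * u := by
    calc (v * u) * v = v * (u * v) := by rw [mul_assoc]
      _ = v * u := by rw [huv]
  have hv_eq : v = v * u := h8.symm.trans h9
  rw [hvu] at hv_eq
  exact hv_eq.symm

end Aux

/-- Every finite normal orthogroup satisfies (xy)^ω = x^ω y^ω, where a^ω denotes the
unique idempotent power of a. -/
theorem normal_orthogroup_omega_mul
    {S : Type*} [Semigroup S] [Fintype S] (ω : S → S)
    (hpow : ∀ a : S, ∃ n : ℕ, ω a = spow a n)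
    (hidem : ∀ a : S, ω a * ω a = ω a)
    (hcr_left : ∀ a : S, ω a * a = a)
    (hcr_right : ∀ a : S, a * ω a = a)
    (horthodox : ∀ e f : S, e * e = e → f * f = f → (e * f) * (e * f) = e * f)
    (hnormal : ∀ e f g : S, e * e = e → f * f = f → g * g = g →
      e * f * e * g * e = e * g * e * f * e) :
    ∀ x y : S, ω (x * y) = ω x * ω y := by
  intro x y
  obtain ⟨x', hx'1, hx'2⟩ := inv_exists ω hpow hcr_left hcr_right x
  obtain ⟨y', hy'1, hy'2⟩ := inv_exists ω hpow hcr_left hcr_right y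
  obtain ⟨z, hz1, hz2⟩ := inv_exists ω hpow hcr_left hcr_right (x * y)
  -- e = ω x, f = ω y, g = ω (x*y)
  -- heg : ω x * ω (x*y) = ω (x*y)
  have heg : ω x * ω (x * y) = ω (x * y) := by
    calc ω x * ω (x * y) = ω x * ((x * y) * z) := by rw [hz1]
      _ = ((ω x * x) * y) * z := by simp only [mul_assoc]
      _ = (x * y) * z := by rw [hcr_left x]
      _ = ω (x * y) := hz1
  -- hgf : ω (x*y) * ω y = ω (x*y)
  have hgf : ω (x * y) * ω y = ω (x * y) := by
    calc ω (x * y) * ω y = (z * (x * y)) * ω y := by rw [hz2]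
      _ = z * (x * (y * ω y)) := by simp only [mul_assoc]
      _ = z * (x * y) := by rw [hcr_right y]
      _ = ω (x * y) := hz2
  -- U1 : ω y * ω (x*y) * ω x = ω y * ω x
  have hU1 : ω y * ω (x * y) * ω x = ω y * ω x := by
    have hswap : y * ω (x * y) = ω (y * x) * y := (omega_shift ω hpow hidem y x).symm
    calc ω y * ω (x * y) * ω x
        = (y' * y) * ω (x * y) * (x * x') := by rw [hy'2, hx'1]
      _ = y' * (y * ω (x * y)) * (x * x') := by simp only [mul_assoc]
      _ = y' * (ω (y * x) * y) * (x * x') := by rw [hswap]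
      _ = y' * (ω (y * x) * (y * x)) * x' := by simp only [mul_assoc]
      _ = y' * (y * x) * x' := by rw [hcr_left (y * x)]
      _ = (y' * y) * (x * x') := by simp only [mul_assoc]
      _ = ω y * ω x := by rw [hy'2, hx'1]
  -- idempotency of the relevant products
  have hef : (ω x * ω y) * (ω x * ω y) = ω x * ω y :=
    horthodox _ _ (hidem x) (hidem y)
  have hge : (ω (x * y) * ω x) * (ω (x * y) * ω x) = ω (x * y) * ω x := by
    calc (ω (x * y) * ω x) * (ω (x * y) * ω x)
        = ω (x * y) * (ω x * ω (x * y)) * ω x := by simp only [mul_assoc]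
      _ = ω (x * y) * ω (x * y) * ω x := by rw [heg]
      _ = ω (x * y) * ω x := by rw [hidem]
  have hfg : (ω y * ω (x * y)) * (ω y * ω (x * y)) = ω y * ω (x * y) := by
    calc (ω y * ω (x * y)) * (ω y * ω (x * y))
        = ω y * (ω (x * y) * ω y) * ω (x * y) := by simp only [mul_assoc]
      _ = ω y * ω (x * y) * ω (x * y) := by rw [hgf]
      _ = ω y * ω (x * y) := by rw [mul_assoc, hidem]
  -- V1 via normality: ω (x*y) * ω x * ω y * ω x = ω x * ω y * ω x
  have hn1 := hnormal (ω x) (ω (x * y) * ω x) (ω y) (hidem x) hge (hidem y)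
  have hV1 : ω (x * y) * ω x * ω y * ω x = ω x * ω y * ω x := by
    have lhs_eq : ω x * (ω (x * y) * ω x) * ω x * ω y * ω x
        = ω (x * y) * ω x * ω y * ω x := by
      calc ω x * (ω (x * y) * ω x) * ω x * ω y * ω x
          = (ω x * ω (x * y)) * ((ω x * ω x) * (ω y * ω x)) := by simp only [mul_assoc]
        _ = ω (x * y) * ((ω x * ω x) * (ω y * ω x)) := by rw [heg]
        _ = ω (x * y) * (ω x * (ω y * ω x)) := by rw [hidem]
        _ = ω (x * y) * ω x * ω y * ω x := by simp only [mul_assoc]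
    have rhs_eq : ω x * ω y * ω x * (ω (x * y) * ω x) * ω x
        = ω x * ω y * ω x := by
      calc ω x * ω y * ω x * (ω (x * y) * ω x) * ω x
          = ω x * ω y * ((ω x * ω (x * y)) * (ω x * ω x)) := by simp only [mul_assoc]
        _ = ω x * ω y * (ω (x * y) * ω x) := by rw [heg, hidem]
        _ = ω x * (ω y * ω (x * y) * ω x) := by simp only [mul_assoc]
        _ = ω x * (ω y * ω x) := by rw [hU1]
        _ = ω x * ω y * ω x := by rw [← mul_assoc]
    exact lhs_eq.symm.trans (hn1.trans rhs_eq)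
  -- B1 : ω (x*y) * (ω x * ω y) = ω x * ω y
  have hB1 : ω (x * y) * (ω x * ω y) = ω x * ω y := by
    calc ω (x * y) * (ω x * ω y)
        = ω (x * y) * ((ω x * ω y) * (ω x * ω y)) := by rw [hef]
      _ = (ω (x * y) * ω x * ω y * ω x) * ω y := by simp only [mul_assoc]
      _ = (ω x * ω y * ω x) * ω y := by rw [hV1]
      _ = (ω x * ω y) * (ω x * ω y) := by simp only [mul_assoc]
      _ = ω x * ω y := hef
  -- V2 via normality: ω y * ω x * ω y * ω (x*y) = ω y * ω x * ω y
  have hn2 := hnormal (ω y) (ω x) (ω y * ω (x * y)) (hidem y) (hidem x) hfg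
  have hV2 : ω y * ω x * ω y * ω (x * y) = ω y * ω x * ω y := by
    have lhs_eq : ω y * ω x * ω y * (ω y * ω (x * y)) * ω y
        = ω y * ω x * ω y * ω (x * y) := by
      calc ω y * ω x * ω y * (ω y * ω (x * y)) * ω y
          = ω y * ω x * ((ω y * ω y) * (ω (x * y) * ω y)) := by simp only [mul_assoc]
        _ = ω y * ω x * (ω y * ω (x * y)) := by rw [hidem, hgf]
        _ = ω y * ω x * ω y * ω (x * y) := by simp only [mul_assoc]
    have rhs_eq : ω y * (ω y * ω (x * y)) * ω y * ω x * ω y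
        = ω y * ω x * ω y := by
      calc ω y * (ω y * ω (x * y)) * ω y * ω x * ω y
          = (ω y * ω y) * ((ω (x * y) * ω y) * (ω x * ω y)) := by simp only [mul_assoc]
        _ = ω y * (ω (x * y) * (ω x * ω y)) := by rw [hidem, hgf]
        _ = (ω y * ω (x * y) * ω x) * ω y := by simp only [mul_assoc]
        _ = (ω y * ω x) * ω y := by rw [hU1]
        _ = ω y * ω x * ω y := rfl
    exact lhs_eq.symm.trans (hn2.trans rhs_eq)
  -- B2 : (ω x * ω y) * ω (x*y) = ω x * ω y
  have hB2 : (ω x * ω y) * ω (x * y) = ω x * ω y := by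
    calc (ω x * ω y) * ω (x * y)
        = ((ω x * ω y) * (ω x * ω y)) * ω (x * y) := by rw [hef]
      _ = ω x * (ω y * ω x * ω y * ω (x * y)) := by simp only [mul_assoc]
      _ = ω x * (ω y * ω x * ω y) := by rw [hV2]
      _ = (ω x * ω y) * (ω x * ω y) := by simp only [mul_assoc]
      _ = ω x * ω y := hef
  -- sandwich : ω (x*y) = x * (ω x * ω y) * (y * z)
  have hsand : ω (x * y) = x * (ω x * ω y) * (y * z) := by
    calc ω (x * y) = (x * y) * z := hz1.symm
      _ = ((x * ω x) * (ω y * y)) * z := by rw [hcr_right x, hcr_left y]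
      _ = x * (ω x * ω y) * (y * z) := by simp only [mul_assoc]
  exact (stab ω hpow hidem (ω x * ω y) (ω (x * y)) x (y * z) hef hB2 hB1 hsand).symm
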